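/- arXiv:1606.01686 — 2 statements merged into one kernel-verified Lean document; each statement's English description precedes it below -/
import Mathlib

section
/- Let μ be a locally finite Borel measure on ℝ² (finite on bounded sets), let y > 0 and c ≥ 0, and suppose that (1/(πs²)) ∫_{B_s} μ(B(t,y)) dt → πy² · c as s → ∞ (integral with respect to Lebesgue measure). Then μ(B_r)/(πr²) → c as r → ∞. -/
open MeasureTheory Metric Real Filter

local notation "E" => EuclideanSpace ℝ (Fin 2)

lemma vol2 (x : EuclideanSpace ℝ (Fin 2)) (r : ℝ) (hr : 0 ≤ r) :
    volume (closedBall x r) = ENNReal.ofReal (π * r ^ 2) := by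
  rw [EuclideanSpace.volume_closedBall]
  have h2 : ((Fintype.card (Fin 2) : ℝ)) / 2 + 1 = 2 := by simp; norm_num
  rw [Fintype.card_fin] at h2 ⊢
  rw [h2, Real.Gamma_two, Real.sq_sqrt pi_pos.le,
    ← ENNReal.ofReal_pow hr, ← ENNReal.ofReal_mul (by positivity)]
  ring_nf

lemma fubini_id (μ : Measure (EuclideanSpace ℝ (Fin 2))) [SigmaFinite μ] (y s : ℝ) :
    (∫⁻ t in closedBall (0 : E) s, μ (closedBall t y)) =
      ∫⁻ x, volume (closedBall x y ∩ closedBall (0 : E) s) ∂μ := by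
  have hmeas : AEMeasurable (Function.uncurry fun (t : E) (x : E) =>
      (closedBall t y).indicator (fun _ => (1 : ENNReal)) x)
      ((volume.restrict (closedBall (0 : E) s)).prod μ) := by
    have : (Function.uncurry fun (t : E) (x : E) =>
        (closedBall t y).indicator (fun _ => (1 : ENNReal)) x) =
        Set.indicator {p : E × E | dist p.2 p.1 ≤ y} (fun _ => (1 : ENNReal)) := by
      funext p
      simp [Function.uncurry, Set.indicator, Metric.mem_closedBall]
    rw [this]
    exact ((measurable_const.indicator
      ((isClosed_le (continuous_snd.dist continuous_fst) continuous_const).measurableSet))).aemeasurable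
  calc (∫⁻ t in closedBall (0 : E) s, μ (closedBall t y))
      = ∫⁻ t in closedBall (0 : E) s, ∫⁻ x, (closedBall t y).indicator (fun _ => (1:ENNReal)) x ∂μ := by
        refine lintegral_congr fun t => ?_
        rw [lintegral_indicator_const measurableSet_closedBall, one_mul]
    _ = ∫⁻ x, ∫⁻ t in closedBall (0 : E) s, (closedBall t y).indicator (fun _ => (1:ENNReal)) x ∂volume ∂μ :=
        lintegral_lintegral_swap hmeas
    _ = ∫⁻ x, volume (closedBall x y ∩ closedBall (0 : E) s) ∂μ := by
        refine lintegral_congr fun x => ?_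
        calc (∫⁻ t in closedBall (0 : E) s, (closedBall t y).indicator (fun _ => (1:ENNReal)) x ∂volume)
            = ∫⁻ t in closedBall (0 : E) s, (closedBall x y).indicator (fun _ => (1:ENNReal)) t ∂volume :=
              lintegral_congr fun t => by simp [Set.indicator, Metric.mem_closedBall, dist_comm]
          _ = volume (closedBall x y ∩ closedBall (0 : E) s) := by
              rw [lintegral_indicator_const measurableSet_closedBall, one_mul,
                Measure.restrict_apply measurableSet_closedBall]

lemma bound_upper (μ : Measure (EuclideanSpace ℝ (Fin 2))) [SigmaFinite μ] {y : ℝ} (hy : 0 < y)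
    (s : ℝ) :
    (∫⁻ t in closedBall (0 : E) s, μ (closedBall t y)) ≤
      ENNReal.ofReal (π * y ^ 2) * μ (closedBall (0 : E) (s + y)) := by
  rw [fubini_id μ y s]
  calc (∫⁻ x, volume (closedBall x y ∩ closedBall (0 : E) s) ∂μ)
      ≤ ∫⁻ x, (closedBall (0 : E) (s + y)).indicator
          (fun _ => ENNReal.ofReal (π * y ^ 2)) x ∂μ := by
        refine lintegral_mono fun x => ?_
        by_cases hx : x ∈ closedBall (0 : E) (s + y)
        · rw [Set.indicator_of_mem hx, ← vol2 x y hy.le]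
          exact measure_mono Set.inter_subset_left
        · rw [Set.indicator_of_notMem hx]
          have : closedBall x y ∩ closedBall (0 : E) s = ∅ := by
            ext t
            simp only [Set.mem_inter_iff, Metric.mem_closedBall, Set.mem_empty_iff_false,
              iff_false, not_and]
            intro h1 h2
            exfalso
            apply hx
            rw [Metric.mem_closedBall]
            calc dist x (0 : E) ≤ dist x t + dist t (0 : E) := dist_triangle _ _ _
              _ ≤ y + s := add_le_add (by rwa [dist_comm] at h1) h2
              _ = s + y := add_comm _ _
          rw [this]
          simp
    _ = ENNReal.ofReal (π * y ^ 2) * μ (closedBall (0 : E) (s + y)) :=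
        lintegral_indicator_const measurableSet_closedBall _

lemma bound_lower (μ : Measure (EuclideanSpace ℝ (Fin 2))) [SigmaFinite μ] {y : ℝ} (hy : 0 < y)
    (s : ℝ) :
    ENNReal.ofReal (π * y ^ 2) * μ (closedBall (0 : E) (s - y)) ≤
      (∫⁻ t in closedBall (0 : E) s, μ (closedBall t y)) := by
  rw [fubini_id μ y s]
  calc ENNReal.ofReal (π * y ^ 2) * μ (closedBall (0 : E) (s - y))
      = ∫⁻ x, (closedBall (0 : E) (s - y)).indicator
          (fun _ => ENNReal.ofReal (π * y ^ 2)) x ∂μ :=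
        (lintegral_indicator_const measurableSet_closedBall _).symm
    _ ≤ ∫⁻ x, volume (closedBall x y ∩ closedBall (0 : E) s) ∂μ := by
        refine lintegral_mono fun x => ?_
        by_cases hx : x ∈ closedBall (0 : E) (s - y)
        · rw [Set.indicator_of_mem hx]
          have hsub : closedBall x y ⊆ closedBall (0 : E) s := by
            intro t ht
            rw [Metric.mem_closedBall] at *
            calc dist t (0 : E) ≤ dist t x + dist x (0 : E) := dist_triangle _ _ _
              _ ≤ y + (s - y) := add_le_add ht hx
              _ = s := by ring
          exact le_of_eq (by rw [Set.inter_eq_left.mpr hsub, vol2 x y hy.le])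
        · rw [Set.indicator_of_notMem hx]
          exact zero_le

/-- The deterministic content of equations (5)–(10) of the paper: if the
window-averaged integrals `(1/(πs²)) ∫_{B_s} μ(B(t,y)) dt` converge to `πy²·c`
as `s → ∞`, then `μ(B_r)/(πr²) → c` as `r → ∞`. -/
theorem density_limit (μ : Measure (EuclideanSpace ℝ (Fin 2)))
    (hμ : ∀ s : Set (EuclideanSpace ℝ (Fin 2)), Bornology.IsBounded s → μ s < ⊤)
    (y c : ℝ) (hy : 0 < y) (hc : 0 ≤ c)
    (hlim : Tendsto
      (fun s : ℝ => (1 / (π * s ^ 2)) *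
        (∫⁻ t in closedBall (0 : EuclideanSpace ℝ (Fin 2)) s, μ (closedBall t y)).toReal)
      atTop (nhds (π * y ^ 2 * c))) :
    Tendsto (fun r : ℝ => (μ (closedBall (0 : EuclideanSpace ℝ (Fin 2)) r)).toReal / (π * r ^ 2))
      atTop (nhds c) := by
  haveI : IsLocallyFiniteMeasure μ :=
    ⟨fun x => ⟨ball x 1, ball_mem_nhds x one_pos, hμ _ Metric.isBounded_ball⟩⟩
  haveI : SigmaFinite μ := sigmaFinite_of_locallyFinite
  set G : ℝ → ℝ := fun s => (∫⁻ t in closedBall (0 : E) s, μ (closedBall t y)).toReal with hGdef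
  have hπy : (0:ℝ) < π * y ^ 2 := by positivity
  have hIfin : ∀ s : ℝ, (∫⁻ t in closedBall (0 : E) s, μ (closedBall t y)) ≠ ⊤ := by
    intro s
    refine ne_top_of_le_ne_top ?_ (bound_upper μ hy s)
    exact (ENNReal.mul_lt_top ENNReal.ofReal_lt_top (hμ _ Metric.isBounded_closedBall)).ne
  have kup : ∀ r : ℝ, π * y ^ 2 * (μ (closedBall (0 : E) r)).toReal ≤ G (r + y) := by
    intro r
    have h := bound_lower μ hy (r + y)
    rw [add_sub_cancel_right] at h
    have := ENNReal.toReal_mono (hIfin (r + y)) h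
    rwa [ENNReal.toReal_mul, ENNReal.toReal_ofReal hπy.le] at this
  have klo : ∀ r : ℝ, G (r - y) ≤ π * y ^ 2 * (μ (closedBall (0 : E) r)).toReal := by
    intro r
    have h := bound_upper μ hy (r - y)
    rw [sub_add_cancel] at h
    have hfin : ENNReal.ofReal (π * y ^ 2) * μ (closedBall (0 : E) r) ≠ ⊤ :=
      (ENNReal.mul_lt_top ENNReal.ofReal_lt_top (hμ _ Metric.isBounded_closedBall)).ne
    have := ENNReal.toReal_mono hfin h
    rwa [ENNReal.toReal_mul, ENNReal.toReal_ofReal hπy.le] at this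
  set upper : ℝ → ℝ := fun r =>
    (1 / (π * (r + y) ^ 2) * G (r + y)) * ((r + y) ^ 2 / r ^ 2) * (π * y ^ 2)⁻¹ with hupdef
  set lower : ℝ → ℝ := fun r =>
    (1 / (π * (r - y) ^ 2) * G (r - y)) * ((r - y) ^ 2 / r ^ 2) * (π * y ^ 2)⁻¹ with hlodef
  have hdiv : Tendsto (fun r : ℝ => y / r) atTop (nhds 0) :=
    tendsto_const_nhds.div_atTop tendsto_id
  have hq1 : Tendsto (fun r : ℝ => (r + y) ^ 2 / r ^ 2) atTop (nhds 1) := by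
    have heq : (fun r : ℝ => (r + y) ^ 2 / r ^ 2) =ᶠ[atTop] fun r => (1 + y / r) ^ 2 := by
      filter_upwards [eventually_gt_atTop (0:ℝ)] with r hr
      rw [← div_pow]
      congr 1
      field_simp
    have : Tendsto (fun r : ℝ => (1 + y / r) ^ 2) atTop (nhds ((1 + 0) ^ 2)) :=
      (tendsto_const_nhds.add hdiv).pow 2
    simpa using Tendsto.congr' heq.symm this
  have hq2 : Tendsto (fun r : ℝ => (r - y) ^ 2 / r ^ 2) atTop (nhds 1) := by
    have heq : (fun r : ℝ => (r - y) ^ 2 / r ^ 2) =ᶠ[atTop] fun r => (1 - y / r) ^ 2 := by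
      filter_upwards [eventually_gt_atTop (0:ℝ)] with r hr
      rw [← div_pow]
      congr 1
      field_simp
    have : Tendsto (fun r : ℝ => (1 - y / r) ^ 2) atTop (nhds ((1 - 0) ^ 2)) :=
      (tendsto_const_nhds.sub hdiv).pow 2
    simpa using Tendsto.congr' heq.symm this
  have hg1 : Tendsto (fun r : ℝ => 1 / (π * (r + y) ^ 2) * G (r + y)) atTop
      (nhds (π * y ^ 2 * c)) :=
    hlim.comp (tendsto_atTop_add_const_right atTop y tendsto_id)
  have hg2 : Tendsto (fun r : ℝ => 1 / (π * (r - y) ^ 2) * G (r - y)) atTop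
      (nhds (π * y ^ 2 * c)) := by
    have := hlim.comp (tendsto_atTop_add_const_right atTop (-y) tendsto_id)
    simpa [sub_eq_add_neg, Function.comp_def, hGdef] using this
  have hup : Tendsto upper atTop (nhds c) := by
    have := (hg1.mul hq1).mul (tendsto_const_nhds (x := (π * y ^ 2)⁻¹))
    have heq : π * y ^ 2 * c * 1 * (π * y ^ 2)⁻¹ = c := by field_simp
    rwa [heq] at this
  have hlo : Tendsto lower atTop (nhds c) := by
    have := (hg2.mul hq2).mul (tendsto_const_nhds (x := (π * y ^ 2)⁻¹))
    have heq : π * y ^ 2 * c * 1 * (π * y ^ 2)⁻¹ = c := by field_simp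
    rwa [heq] at this
  refine tendsto_of_tendsto_of_tendsto_of_le_of_le' hlo hup ?_ ?_
  · filter_upwards [eventually_gt_atTop y] with r hr
    have hr0 : (0:ℝ) < r := hy.trans hr
    have hry : (0:ℝ) < r - y := by linarith
    have e2 : lower r = G (r - y) / (π * y ^ 2 * (π * r ^ 2)) := by
      rw [hlodef]
      field_simp
    rw [e2, div_le_div_iff₀ (by positivity) (by positivity)]
    nlinarith [mul_le_mul_of_nonneg_right (klo r) (show (0:ℝ) ≤ π * r ^ 2 by positivity)]
  · filter_upwards [eventually_gt_atTop y] with r hr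
    have hr0 : (0:ℝ) < r := hy.trans hr
    have hry : (0:ℝ) < r + y := by linarith
    have e1 : upper r = G (r + y) / (π * y ^ 2 * (π * r ^ 2)) := by
      rw [hupdef]
      field_simp
    rw [e1, div_le_div_iff₀ (by positivity) (by positivity)]
    nlinarith [mul_le_mul_of_nonneg_right (kup r) (show (0:ℝ) ≤ π * r ^ 2 by positivity)]
end

section
/- Let 𝒮 be a countable collection of closed line segments in ℝ² such that every bounded subset of ℝ² contains only finitely many segment endpoints and carries finite total segment length; for a set D ⊆ ℝ² let ℓ(D) = Σ_{s ∈ 𝒮} ℋ¹(s ∩ D) be the total length of the segments within D, where ℋ¹ is one-dimensional Hausdorff measure. Then for all r > 0 and y > 0, the number of segments of 𝒮 that intersect the closed disc B_r but are not contained in B_r is at most (ℓ(B_{r+y}) − ℓ(B_r))/y + (the number of segment endpoints lying in B_{r+y} ∖ B_r). -/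
open MeasureTheory Metric Real
open scoped ENNReal NNReal

private lemma annulus_length_lb {E : Type*} [NormedAddCommGroup E] [NormedSpace ℝ E]
    [MeasurableSpace E] [BorelSpace E] {q p : E} {r y : ℝ}
    (hq : q ∈ closedBall (0:E) r) (hp : p ∉ closedBall (0:E) (r+y)) :
    ENNReal.ofReal y ≤ μH[1] (segment ℝ q p ∩ (closedBall 0 (r+y) \ closedBall 0 r)) := by
  set A := closedBall (0:E) (r+y) \ closedBall 0 r
  have hsub : Set.Ioc r (r+y) ⊆ (fun x : E => ‖x‖) '' (segment ℝ q p ∩ A) := by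
    intro c hc
    have hconn : IsPreconnected (segment ℝ q p) := (convex_segment q p).isPreconnected
    have hiv := hconn.intermediate_value (left_mem_segment ℝ q p) (right_mem_segment ℝ q p)
      continuous_norm.continuousOn
    have hqn : ‖q‖ ≤ r := by simpa [mem_closedBall, dist_eq_norm] using hq
    have hpn : r + y < ‖p‖ := by
      simp only [mem_closedBall, dist_eq_norm, not_le, sub_zero] at hp; simpa using hp
    obtain ⟨x, hx, hxc⟩ := hiv ⟨le_trans hqn hc.1.le, le_trans hc.2 hpn.le⟩
    refine ⟨x, ⟨hx, ?_, ?_⟩, hxc⟩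
    · simpa [mem_closedBall, dist_eq_norm, hxc] using hc.2
    · simp only [mem_closedBall, dist_eq_norm, not_le, sub_zero, hxc]
      simpa [hxc] using hc.1
  calc ENNReal.ofReal y = μH[1] (Set.Ioc r (r+y)) := by
        rw [MeasureTheory.hausdorffMeasure_real, Real.volume_Ioc]; ring_nf
    _ ≤ μH[1] ((fun x : E => ‖x‖) '' (segment ℝ q p ∩ A)) := measure_mono hsub
    _ ≤ μH[1] (segment ℝ q p ∩ A) := by
        simpa using lipschitzWith_one_norm.hausdorffMeasure_image_le zero_le_one
          (segment ℝ q p ∩ A)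

/-- The truncated-segment bound of Section 9 of the paper: for a line-segment
process with locally finitely many endpoints and locally finite length, the
number of segments meeting the disc `B_r` but not contained in it is at most
`(ℓ(B_{r+y}) − ℓ(B_r))/y` plus the number of segment endpoints in the annulus
`B_{r+y} ∖ B_r`. -/
theorem truncated_segment_bound {ι : Type*} [Countable ι]
    (a b : ι → EuclideanSpace ℝ (Fin 2))
    (hfin : ∀ D : Set (EuclideanSpace ℝ (Fin 2)), Bornology.IsBounded D →
      {i | a i ∈ D ∨ b i ∈ D}.Finite)
    (hlen : ∀ D : Set (EuclideanSpace ℝ (Fin 2)), Bornology.IsBounded D →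
      (∑' i, μH[1] (segment ℝ (a i) (b i) ∩ D)) < ⊤)
    (r y : ℝ) (hr : 0 < r) (hy : 0 < y) :
    (Set.ncard {i | (segment ℝ (a i) (b i) ∩ closedBall 0 r).Nonempty ∧
        ¬ segment ℝ (a i) (b i) ⊆ closedBall 0 r} : ℝ) ≤
      ((∑' i, μH[1] (segment ℝ (a i) (b i) ∩ closedBall 0 (r + y))).toReal -
          (∑' i, μH[1] (segment ℝ (a i) (b i) ∩ closedBall 0 r)).toReal) / y +
        ((Set.ncard {i | a i ∈ closedBall 0 (r + y) \ closedBall 0 r} : ℝ) +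
          (Set.ncard {i | b i ∈ closedBall 0 (r + y) \ closedBall 0 r} : ℝ)) := by
  set A : Set (EuclideanSpace ℝ (Fin 2)) := closedBall 0 (r + y) \ closedBall 0 r with hA
  set P : ι → Set (EuclideanSpace ℝ (Fin 2)) := fun i => segment ℝ (a i) (b i) with hPdef
  set f : ι → ℝ≥0∞ := fun i => μH[1] (P i ∩ closedBall 0 r) with hf
  set g : ι → ℝ≥0∞ := fun i => μH[1] (P i ∩ closedBall 0 (r + y)) with hg
  set h : ι → ℝ≥0∞ := fun i => μH[1] (P i ∩ A) with hh
  have hBsub : closedBall (0:EuclideanSpace ℝ (Fin 2)) r ⊆ closedBall 0 (r + y) :=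
    closedBall_subset_closedBall (by linarith)
  -- split the measure of each segment
  have hsplit : ∀ i, g i = f i + h i := by
    intro i
    have H := measure_inter_add_diff (μ := μH[1]) (P i ∩ closedBall 0 (r + y))
      (measurableSet_closedBall (x := (0:EuclideanSpace ℝ (Fin 2))) (ε := r))
    have h1 : P i ∩ closedBall 0 (r + y) ∩ closedBall 0 r = P i ∩ closedBall 0 r := by
      rw [Set.inter_assoc, Set.inter_eq_self_of_subset_right hBsub]
    have h2 : (P i ∩ closedBall 0 (r + y)) \ closedBall 0 r = P i ∩ A := by
      rw [Set.inter_diff_assoc]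
    rw [h1, h2] at H
    exact H.symm
  have hsum : ∑' i, g i = (∑' i, f i) + ∑' i, h i := by
    rw [← ENNReal.tsum_add]; exact tsum_congr hsplit
  have hgfin : (∑' i, g i) ≠ ⊤ := (hlen _ isBounded_closedBall).ne
  have hffin : (∑' i, f i) ≠ ⊤ := (hlen _ isBounded_closedBall).ne
  have hhfin : (∑' i, h i) ≠ ⊤ := by
    intro htop
    exact hgfin (by simp [hsum, htop])
  have key : (∑' i, g i).toReal - (∑' i, f i).toReal = (∑' i, h i).toReal := by
    rw [hsum, ENNReal.toReal_add hffin hhfin]; ring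
  -- the three exceptional sets
  have hAbd : Bornology.IsBounded A := isBounded_closedBall.subset Set.diff_subset
  have hSa : {i | a i ∈ A}.Finite := (hfin A hAbd).subset fun i hi => Or.inl hi
  have hSb : {i | b i ∈ A}.Finite := (hfin A hAbd).subset fun i hi => Or.inr hi
  set Sy : Set ι := {i | ENNReal.ofReal y ≤ h i} with hSy
  have hSyFin : Sy.Finite :=
    ENNReal.finite_const_le_of_tsum_ne_top hhfin (by positivity)
  -- every truncated segment lies in one of the three sets
  set S : Set ι := {i | (P i ∩ closedBall 0 r).Nonempty ∧ ¬ P i ⊆ closedBall 0 r} with hS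
  have hSsub : S ⊆ {i | a i ∈ A} ∪ {i | b i ∈ A} ∪ Sy := by
    rintro i ⟨⟨q, hqP, hqB⟩, hnsub⟩
    by_cases ha' : a i ∈ A
    · exact Or.inl (Or.inl ha')
    by_cases hb' : b i ∈ A
    · exact Or.inl (Or.inr hb')
    right
    have hend : a i ∉ closedBall (0:EuclideanSpace ℝ (Fin 2)) r ∨ b i ∉ closedBall (0:EuclideanSpace ℝ (Fin 2)) r := by
      by_contra hc
      push_neg at hc
      exact hnsub ((convex_closedBall (0:EuclideanSpace ℝ (Fin 2)) r).segment_subset hc.1 hc.2)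
    have hout : ∃ p, p ∈ P i ∧ p ∉ closedBall (0:EuclideanSpace ℝ (Fin 2)) (r + y) := by
      rcases hend with hA' | hB'
      · refine ⟨a i, left_mem_segment ℝ _ _, fun hmem => ha' ⟨hmem, hA'⟩⟩
      · refine ⟨b i, right_mem_segment ℝ _ _, fun hmem => hb' ⟨hmem, hB'⟩⟩
    obtain ⟨p, hpP, hp⟩ := hout
    have hseg : segment ℝ q p ⊆ P i := (convex_segment (a i) (b i)).segment_subset hqP hpP
    calc ENNReal.ofReal y ≤ μH[1] (segment ℝ q p ∩ A) := annulus_length_lb hqB hp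
      _ ≤ h i := measure_mono (Set.inter_subset_inter_left _ hseg)
  have hSfin : S.Finite := (((hSa.union hSb).union hSyFin)).subset hSsub
  -- cardinality bound via the three sets
  have hcard : S.ncard ≤ {i | a i ∈ A}.ncard + {i | b i ∈ A}.ncard + Sy.ncard := by
    calc S.ncard ≤ ({i | a i ∈ A} ∪ {i | b i ∈ A} ∪ Sy).ncard :=
          Set.ncard_le_ncard hSsub ((hSa.union hSb).union hSyFin)
      _ ≤ ({i | a i ∈ A} ∪ {i | b i ∈ A}).ncard + Sy.ncard := Set.ncard_union_le _ _
      _ ≤ {i | a i ∈ A}.ncard + {i | b i ∈ A}.ncard + Sy.ncard := by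
          have := Set.ncard_union_le {i | a i ∈ A} {i | b i ∈ A}
          omega
  -- each element of Sy contributes at least y of length to the annulus
  have hSyBound : (Sy.ncard : ℝ) * y ≤ (∑' i, h i).toReal := by
    have hEN : ENNReal.ofReal ((Sy.ncard : ℝ) * y) ≤ ∑' i, h i := by
      have hfs : ∑ i ∈ hSyFin.toFinset, h i ≤ ∑' i, h i := ENNReal.sum_le_tsum _
      refine le_trans ?_ hfs
      calc ENNReal.ofReal ((Sy.ncard : ℝ) * y)
          = hSyFin.toFinset.card • ENNReal.ofReal y := by
            rw [ENNReal.ofReal_mul (by positivity), Set.ncard_eq_toFinset_card _ hSyFin]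
            simp [nsmul_eq_mul, ENNReal.ofReal_natCast]
        _ = ∑ _i ∈ hSyFin.toFinset, ENNReal.ofReal y := (Finset.sum_const _).symm
        _ ≤ ∑ i ∈ hSyFin.toFinset, h i :=
            Finset.sum_le_sum fun i hi => hSyFin.mem_toFinset.mp hi
    have := ENNReal.toReal_mono hhfin hEN
    rwa [ENNReal.toReal_ofReal (by positivity)] at this
  have hSyle : (Sy.ncard : ℝ) ≤ (∑' i, h i).toReal / y := by
    rw [le_div_iff₀ hy]; exact hSyBound
  -- assemble
  rw [key]
  have hcardR : (S.ncard : ℝ) ≤ ({i | a i ∈ A}.ncard : ℝ) + ({i | b i ∈ A}.ncard : ℝ) +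
      (Sy.ncard : ℝ) := by exact_mod_cast hcard
  linarith
end
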